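/- On the homogeneous tree T_q, at the special spectral points λ = (τ/2)j with τ = 2π/log q and j ∈ ℤ, the function φ(r) = (−1)^{jr} (1 + ((q^{1/2}−q^{−1/2})/(q^{1/2}+q^{−1/2})) r) q^{−r/2} satisfies A φ = γ((τ/2)j) φ and φ(0) = 1, where γ(λ) = (q^{iλ}+q^{−iλ})/(q^{1/2}+q^{−1/2}) and A is the radial averaging operator (Aφ)(0) = φ(1), (Aφ)(r) = (qφ(r+1)+φ(r−1))/(q+1) for r ≥ 1. -/

import Mathlib

open Real

/-- On the homogeneous tree `T_q`, at the special spectral points `λ = (τ/2)j`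
(`τ = 2π/log q`, `j ∈ ℤ`), the function
`φ(r) = (−1)^{jr}(1 + ((q^{1/2}−q^{−1/2})/(q^{1/2}+q^{−1/2}))r)q^{−r/2}` satisfies
`Aφ = γ((τ/2)j)φ` with `γ((τ/2)j) = (−1)^j·2/(q^{1/2}+q^{−1/2})`, `φ(0) = 1`, for the
radial averaging operator `(Aφ)(0) = φ(1)`, `(Aφ)(r) = (qφ(r+1)+φ(r−1))/(q+1)`. -/
theorem stmt_13 (q : ℕ) (hq : 2 ≤ q) (j : ℤ)
    (γ : ℝ)
    (hγ : γ = (-1 : ℝ) ^ j * 2 / ((q : ℝ) ^ ((1 : ℝ) / 2) + (q : ℝ) ^ (-(1 : ℝ) / 2)))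
    (φ : ℕ → ℝ)
    (hφ : ∀ r : ℕ, φ r = (-1 : ℝ) ^ (j * r) *
      (1 + (((q : ℝ) ^ ((1 : ℝ) / 2) - (q : ℝ) ^ (-(1 : ℝ) / 2)) /
        ((q : ℝ) ^ ((1 : ℝ) / 2) + (q : ℝ) ^ (-(1 : ℝ) / 2))) * r) *
          (q : ℝ) ^ (-(r : ℝ) / 2)) :
    φ 0 = 1 ∧ φ 1 = γ * φ 0 ∧
    ∀ r : ℕ, ((q : ℝ) * φ (r + 2) + φ r) / ((q : ℝ) + 1) = γ * φ (r + 1) := by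
  have hq0 : (0:ℝ) < q := by positivity
  set s : ℝ := (q : ℝ) ^ ((1 : ℝ) / 2) with hs
  set t : ℝ := (q : ℝ) ^ (-(1 : ℝ) / 2) with ht
  have hst : s * t = 1 := by
    rw [hs, ht, ← rpow_add hq0]; norm_num
  have hs2 : s * s = q := by
    rw [hs, ← rpow_add hq0]; norm_num
  have hspos : 0 < s := by rw [hs]; positivity
  have htpos : 0 < t := by rw [ht]; positivity
  have hstne : s + t ≠ 0 := by positivity
  have hq1ne : (q : ℝ) + 1 ≠ 0 := by positivity
  have hpp : (-1 : ℝ) ^ j * (-1 : ℝ) ^ j = 1 := by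
    rw [← zpow_add₀ (by norm_num : (-1:ℝ) ≠ 0)]
    have : j + j = 2 * j := by ring
    rw [this, zpow_mul]; norm_num
  have hsign2 : ∀ r : ℕ, (-1 : ℝ) ^ (j * ((r : ℤ) + 2)) = (-1 : ℝ) ^ (j * r) := by
    intro r
    have h2j : (-1:ℝ) ^ (2 * j) = 1 := by
      rw [zpow_mul]; norm_num
    have : j * ((r : ℤ) + 2) = j * r + 2 * j := by ring
    rw [this, zpow_add₀ (by norm_num : (-1:ℝ) ≠ 0), h2j, mul_one]
  have hsign1 : ∀ r : ℕ, (-1 : ℝ) ^ (j * ((r : ℤ) + 1)) = (-1 : ℝ) ^ (j * r) * (-1:ℝ)^j := by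
    intro r
    have : j * ((r : ℤ) + 1) = j * r + j := by ring
    rw [this, zpow_add₀ (by norm_num : (-1:ℝ) ≠ 0)]
  have hQ2 : ∀ r : ℕ, (q : ℝ) ^ (-((r : ℝ) + 2) / 2) = (q : ℝ) ^ (-(r : ℝ) / 2) * t * t := by
    intro r
    rw [ht, ← rpow_add hq0, ← rpow_add hq0]; ring_nf
  have hQ1 : ∀ r : ℕ, (q : ℝ) ^ (-((r : ℝ) + 1) / 2) = (q : ℝ) ^ (-(r : ℝ) / 2) * t := by
    intro r
    rw [ht, ← rpow_add hq0]; ring_nf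
  have ht' : t = s⁻¹ := by
    field_simp
    linear_combination hst
  refine ⟨?_, ?_, ?_⟩
  · rw [hφ 0]; norm_num
  · rw [hφ 1, hφ 0, hγ]
    push_cast
    simp only [mul_one, mul_zero, zpow_zero, one_mul]
    rw [show (-(0:ℝ)/2) = 0 by norm_num, Real.rpow_zero,
      show ((q:ℝ) ^ ((-1:ℝ)/2)) = t by rw [ht], ht']
    field_simp
    ring
  · intro r
    rw [hφ (r+2), hφ (r+1), hφ r, hγ]
    push_cast
    rw [hsign2 r, hsign1 r, hQ2 r, hQ1 r]
    set e : ℝ := (-1 : ℝ) ^ (j * r) with he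
    set p : ℝ := (-1 : ℝ) ^ j with hp
    have hkill : ∀ A B : ℝ, p * 2 / (s + t) * (e * p * A * B) =
        2 / (s + t) * (e * A * B) := by
      intro A B
      field_simp
      linear_combination (e * A * B) * hpp
    rw [hkill, ← hs2, ht']
    have hs0 : s ≠ 0 := hspos.ne'
    have h1 : s * s + 1 ≠ 0 := by positivity
    have h2 : s + s⁻¹ ≠ 0 := by positivity
    field_simp
    ring
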